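/- The NAP partial compositions on labelled rooted trees satisfy parallel associativity: for rooted trees x on vertex set S, y on T, z on R, and distinct vertices s, s' of x, one has (x ∘_s y) ∘_{s'} z = (x ∘_{s'} z) ∘_s y. -/
import Mathlib


/-- A labelled rooted tree with vertex set `supp` inside an ambient label type `V`,
given by its root and its parent function (normalized to the identity outside
`supp`, and fixing the root). -/
structure LTree (V : Type) where
  supp : Finset V
  root : V
  parent : V → V

namespace LTree

variable {V : Type} [DecidableEq V]

/-- `t` is an honest rooted tree on its vertex set `t.supp`:  the root is a vertex,
the parent map fixes the root, sends vertices to vertices, every vertex reaches the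
root by iterating the parent map (connectedness/acyclicity), and the parent map is
normalized to the identity outside the vertex set. -/
def IsTree (t : LTree V) : Prop :=
  t.root ∈ t.supp ∧ t.parent t.root = t.root ∧
    (∀ v ∈ t.supp, t.parent v ∈ t.supp ∧ ∃ n, t.parent^[n] v = t.root) ∧
    (∀ v, v ∉ t.supp → t.parent v = v)

/-- The NAP partial composition `u ∘ₛ v`: replace the vertex `s` of `u` by the tree
`v`, reconnecting each edge of `u` arriving at `s` to the root of `v`. -/
def ncomp (u : LTree V) (s : V) (v : LTree V) : LTree V where
  supp := u.supp.erase s ∪ v.supp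
  root := if u.root = s then v.root else u.root
  parent x :=
    if x ∈ u.supp.erase s then (if u.parent x = s then v.root else u.parent x)
    else if x ∈ v.supp then
      (if x = v.root then (if u.parent s = s then v.root else u.parent s) else v.parent x)
    else x

/-- Relabelling a tree along a bijection of the ambient label type. -/
def relabel (e : V ≃ V) (t : LTree V) : LTree V where
  supp := t.supp.image e
  root := e t.root
  parent x := e (t.parent (e.symm x))

/-- The single-vertex tree on the vertex `a`. -/
def eta (a : V) : LTree V := ⟨{a}, a, fun x => x⟩

/-- The edges of `u` arriving at `s`, identified with the children of `s`. -/
def children (u : LTree V) (s : V) : Finset V :=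
  (u.supp.erase s).filter (fun w => u.parent w = s)

/-- The tree `u ∘ₛᶠ v` for `f : In(s,u) → Ver(v)`: replace the vertex `s` of `u` by
the tree `v`, reconnecting each edge `a ∈ In(s,u)` to the vertex `f a` of `v`. -/
def fcomp (u : LTree V) (s : V) (v : LTree V) (f : V → V) : LTree V where
  supp := u.supp.erase s ∪ v.supp
  root := if u.root = s then v.root else u.root
  parent x :=
    if x ∈ u.supp.erase s then (if u.parent x = s then f x else u.parent x)
    else if x ∈ v.supp then
      (if x = v.root then (if u.parent s = s then v.root else u.parent s) else v.parent x)
    else x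

/-- The Pre-Lie partial composition `u ∘ₛ v := Σ_{f : In(s,u) → Ver(v)} u ∘ₛᶠ v`,
a formal linear combination of rooted trees. -/
noncomputable def plcomp (u : LTree V) (s : V) (v : LTree V) : LTree V →₀ ℚ :=
  ∑ f : {w // w ∈ children u s} → {x // x ∈ v.supp},
    Finsupp.single
      (fcomp u s v (fun w => if h : w ∈ children u s then (f ⟨w, h⟩ : V) else v.root)) 1

/-- Bilinear extension of the Pre-Lie partial composition to formal sums. -/
noncomputable def plext (x : LTree V →₀ ℚ) (s : V) (y : LTree V →₀ ℚ) : LTree V →₀ ℚ :=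
  x.sum fun t a => y.sum fun u b => (a * b) • plcomp t s u

end LTree

namespace LTree

variable {V : Type} [DecidableEq V]

lemma ncomp_supp' (u : LTree V) (s : V) (v : LTree V) :
    (ncomp u s v).supp = u.supp.erase s ∪ v.supp := rfl

lemma ncomp_root' (u : LTree V) (s : V) (v : LTree V) :
    (ncomp u s v).root = if u.root = s then v.root else u.root := rfl

lemma ncomp_parent_mem {u : LTree V} {s : V} (v : LTree V) {w : V}
    (h1 : w ∈ u.supp.erase s) :
    (ncomp u s v).parent w = if u.parent w = s then v.root else u.parent w := by
  simp only [ncomp, if_pos h1]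

lemma ncomp_parent_v {u : LTree V} {s : V} {v : LTree V} {w : V}
    (h1 : w ∉ u.supp.erase s) (h2 : w ∈ v.supp) (h3 : w ≠ v.root) :
    (ncomp u s v).parent w = v.parent w := by
  simp only [ncomp, if_neg h1, if_pos h2, if_neg h3]

lemma ncomp_parent_root {u : LTree V} (s : V) {v : LTree V}
    (h1 : v.root ∉ u.supp.erase s) (h2 : v.root ∈ v.supp) :
    (ncomp u s v).parent v.root = if u.parent s = s then v.root else u.parent s := by
  simp only [ncomp, if_neg h1, if_pos h2, if_true]

lemma ncomp_parent_out {u : LTree V} {s : V} {v : LTree V} {w : V}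
    (h1 : w ∉ u.supp.erase s) (h2 : w ∉ v.supp) :
    (ncomp u s v).parent w = w := by
  simp only [ncomp, if_neg h1, if_neg h2]

end LTree

set_option maxHeartbeats 2000000 in
open LTree in
/-- NAP parallel associativity: for rooted trees `x`, `y`, `z` with pairwise disjoint
vertex sets and distinct vertices `s`, `s'` of `x`,
`(x ∘ₛ y) ∘ₛ' z = (x ∘ₛ' z) ∘ₛ y`. -/
theorem nap_parallel_assoc {V : Type} [DecidableEq V] (x y z : LTree V)
    (hx : x.IsTree) (hy : y.IsTree) (hz : z.IsTree)
    (hxy : Disjoint x.supp y.supp) (hxz : Disjoint x.supp z.supp)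
    (hyz : Disjoint y.supp z.supp)
    (s s' : V) (hs : s ∈ x.supp) (hs' : s' ∈ x.supp) (hss' : s ≠ s') :
    ncomp (ncomp x s y) s' z = ncomp (ncomp x s' z) s y := by
  have hsy : s ∉ y.supp := fun h => Finset.disjoint_left.mp hxy hs h
  have hsz : s ∉ z.supp := fun h => Finset.disjoint_left.mp hxz hs h
  have hs'y : s' ∉ y.supp := fun h => Finset.disjoint_left.mp hxy hs' h
  have hs'z : s' ∉ z.supp := fun h => Finset.disjoint_left.mp hxz hs' h
  have hyrx : ∀ v ∈ y.supp, v ∉ x.supp := fun v hv => Finset.disjoint_right.mp hxy hv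
  have hzrx : ∀ v ∈ z.supp, v ∉ x.supp := fun v hv => Finset.disjoint_right.mp hxz hv
  have hyrz : ∀ v ∈ y.supp, v ∉ z.supp := fun v hv => Finset.disjoint_left.mp hyz hv
  have hyr := hy.1
  have hzr := hz.1
  have hxp : ∀ w ∈ x.supp, x.parent w ∈ x.supp := fun w hw => (hx.2.2.1 w hw).1
  have hyp : ∀ w ∈ y.supp, y.parent w ∈ y.supp := fun w hw => (hy.2.2.1 w hw).1
  have hzp : ∀ w ∈ z.supp, z.parent w ∈ z.supp := fun w hw => (hz.2.2.1 w hw).1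
  have hyrs : y.root ≠ s := fun h => hsy (h ▸ hyr)
  have hyrs' : y.root ≠ s' := fun h => hs'y (h ▸ hyr)
  have hzrs : z.root ≠ s := fun h => hsz (h ▸ hzr)
  have hzrs' : z.root ≠ s' := fun h => hs'z (h ▸ hzr)
  have hsupp : ((x.supp.erase s ∪ y.supp).erase s' ∪ z.supp) =
      ((x.supp.erase s' ∪ z.supp).erase s ∪ y.supp) := by
    ext v
    simp only [Finset.mem_union, Finset.mem_erase]
    constructor
    · rintro (⟨h1, (⟨h2, h3⟩ | h3)⟩ | h1)
      · exact Or.inl ⟨h2, Or.inl ⟨h1, h3⟩⟩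
      · exact Or.inr h3
      · exact Or.inl ⟨fun h => hsz (h ▸ h1), Or.inr h1⟩
    · rintro (⟨h1, (⟨h2, h3⟩ | h3)⟩ | h1)
      · exact Or.inl ⟨h2, Or.inl ⟨h1, h3⟩⟩
      · exact Or.inr h3
      · exact Or.inl ⟨fun h => hs'y (h ▸ h1), Or.inr h1⟩
  have m1 : ∀ w, w ∈ (ncomp x s y).supp ↔ (w ∈ x.supp ∧ w ≠ s) ∨ w ∈ y.supp := by
    intro w
    simp only [ncomp_supp', Finset.mem_union, Finset.mem_erase]
    tauto
  have m2 : ∀ w, w ∈ (ncomp x s' z).supp ↔ (w ∈ x.supp ∧ w ≠ s') ∨ w ∈ z.supp := by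
    intro w
    simp only [ncomp_supp', Finset.mem_union, Finset.mem_erase]
    tauto
  have hroot : (ncomp (ncomp x s y) s' z).root = (ncomp (ncomp x s' z) s y).root := by
    simp only [ncomp_root']
    split_ifs <;> first | rfl | simp_all
  have hpar : (ncomp (ncomp x s y) s' z).parent = (ncomp (ncomp x s' z) s y).parent := by
    funext v
    by_cases hvx : v ∈ x.supp <;> by_cases hvy : v ∈ y.supp <;>
      by_cases hvz : v ∈ z.supp
    · exact absurd hvx (hyrx v hvy)
    · exact absurd hvx (hyrx v hvy)
    · exact absurd hvx (hzrx v hvz)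
    · -- v ∈ x only
      by_cases hv1 : v = s
      · subst hv1
        rw [ncomp_parent_out (v := z)
            (by simp only [Finset.mem_erase, m1]; tauto) hsz,
          ncomp_parent_out (v := y)
            (by simp only [Finset.mem_erase, m2]; tauto) hsy]
      · by_cases hv2 : v = s'
        · subst hv2
          rw [ncomp_parent_out (v := z)
              (by simp only [Finset.mem_erase, m1]; tauto) hs'z,
            ncomp_parent_out (v := y)
              (by simp only [Finset.mem_erase, m2]; tauto) hs'y]
        · have e1 : v ∈ (ncomp x s y).supp.erase s' := by
            simp only [Finset.mem_erase, m1]; tauto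
          have e2 : v ∈ (ncomp x s' z).supp.erase s := by
            simp only [Finset.mem_erase, m2]; tauto
          rw [ncomp_parent_mem z e1, ncomp_parent_mem y e2,
            ncomp_parent_mem y (by simp [Finset.mem_erase, hvx, hv1]),
            ncomp_parent_mem z (by simp [Finset.mem_erase, hvx, hv2])]
          by_cases c1 : x.parent v = s
          · have c2 : x.parent v ≠ s' := fun h => hss' (c1 ▸ h ▸ rfl)
            simp [c1, c2, hyrs, hyrs', hzrs, hzrs', hss', Ne.symm hss']
          · by_cases c2 : x.parent v = s'
            · simp [c1, c2, hyrs, hyrs', hzrs, hzrs', hss', Ne.symm hss']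
            · simp [c1, c2, hyrs, hyrs', hzrs, hzrs', hss', Ne.symm hss']
    · exact absurd hvz (hyrz v hvy)
    · -- v ∈ y only
      have hv1 : v ≠ s := fun h => hsy (h ▸ hvy)
      have hv2 : v ≠ s' := fun h => hs'y (h ▸ hvy)
      have e1 : v ∈ (ncomp x s y).supp.erase s' := by
        simp only [Finset.mem_erase, m1]; tauto
      have e2 : v ∉ (ncomp x s' z).supp.erase s := by
        simp only [Finset.mem_erase, m2]
        rintro ⟨-, (⟨h, -⟩ | h)⟩
        · exact hyrx v hvy h
        · exact hyrz v hvy h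
      rw [ncomp_parent_mem z e1]
      by_cases hvr : v = y.root
      · subst hvr
        rw [ncomp_parent_root (u := x) s
            (by simp only [Finset.mem_erase]
                rintro ⟨-, h⟩; exact hyrx _ hvy h) hvy,
          ncomp_parent_root (u := ncomp x s' z) s e2 hvy,
          ncomp_parent_mem z (by simp [Finset.mem_erase, hs, hss'])]
        by_cases c1 : x.parent s = s
        · have c2 : x.parent s ≠ s' := fun h => hss' (c1 ▸ h ▸ rfl)
          simp [c1, c2, hyrs, hyrs', hzrs, hzrs', hss', Ne.symm hss']
        · by_cases c2 : x.parent s = s'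
          · simp [c1, c2, hyrs, hyrs', hzrs, hzrs', hss', Ne.symm hss']
          · simp [c1, c2, hyrs, hyrs', hzrs, hzrs', hss', Ne.symm hss']
      · rw [ncomp_parent_v
            (by simp only [Finset.mem_erase]
                rintro ⟨-, h⟩; exact hyrx _ hvy h) hvy hvr,
          ncomp_parent_v e2 hvy hvr]
        have hp := hyp v hvy
        have hps' : y.parent v ≠ s' := fun h => hs'y (h ▸ hp)
        simp [hps']
    · -- v ∈ z only
      have hv1 : v ≠ s := fun h => hsz (h ▸ hvz)
      have hv2 : v ≠ s' := fun h => hs'z (h ▸ hvz)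
      have e1 : v ∉ (ncomp x s y).supp.erase s' := by
        simp only [Finset.mem_erase, m1]
        rintro ⟨-, (⟨h, -⟩ | h)⟩
        · exact hzrx v hvz h
        · exact hyrz v h hvz
      have e2 : v ∈ (ncomp x s' z).supp.erase s := by
        simp only [Finset.mem_erase, m2]; tauto
      rw [ncomp_parent_mem y e2]
      by_cases hvr : v = z.root
      · subst hvr
        rw [ncomp_parent_root (u := ncomp x s y) s' e1 hvz,
          ncomp_parent_root (u := x) s'
            (by simp only [Finset.mem_erase]
                rintro ⟨-, h⟩; exact hzrx _ hvz h) hvz,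
          ncomp_parent_mem y (by simp [Finset.mem_erase, hs', Ne.symm hss'])]
        by_cases c1 : x.parent s' = s
        · have c2 : x.parent s' ≠ s' := fun h => hss' (h ▸ c1 ▸ rfl)
          simp [c1, c2, hyrs, hyrs', hzrs, hzrs', hss', Ne.symm hss']
        · by_cases c2 : x.parent s' = s'
          · simp [c1, c2, hyrs, hyrs', hzrs, hzrs', hss', Ne.symm hss']
          · simp [c1, c2, hyrs, hyrs', hzrs, hzrs', hss', Ne.symm hss']
      · rw [ncomp_parent_v e1 hvz hvr,
          ncomp_parent_v
            (by simp only [Finset.mem_erase]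
                rintro ⟨-, h⟩; exact hzrx _ hvz h) hvz hvr]
        have hp := hzp v hvz
        have hps : z.parent v ≠ s := fun h => hsz (h ▸ hp)
        simp [hps]
    · -- v nowhere
      rw [ncomp_parent_out (v := z)
          (by simp only [Finset.mem_erase, m1]; tauto) hvz,
        ncomp_parent_out (v := y)
          (by simp only [Finset.mem_erase, m2]; tauto) hvy]
  show LTree.mk _ _ _ = LTree.mk _ _ _
  rw [LTree.mk.injEq]
  exact ⟨hsupp, hroot, hpar⟩
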